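/- Suppose a¹, …, a^{n−1} : ℝ → ℝ are differentiable at t₀ with a^{i'}(t₀) = 0 and (a^{i'})'(t₀) = 2 S(e_{i'}, e_n) for each i' = 1, …, n−1, and set w(t) = e_n + ∑_{j'=1}^{n−1} a^{j'}(t) e_{j'} and b(t) = √(g(t)(w(t), w(t))). Then b is differentiable at t₀ with b(t₀) = 1 and b'(t₀) = −S(e_n, e_n). (This is the computation db/dt = −Ric_{nn} in Part A of the paper's boundary-term analysis.) -/

import Mathlib

/-- Part A of the boundary-term analysis: with `w(t) = e_n + ∑_{j'} a^{j'}(t) e_{j'}`,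
`a^{i'}(t₀) = 0` and `(a^{i'})'(t₀) = 2 S(e_{i'}, e_n)`, the length
`b(t) = √(g(t)(w(t), w(t)))` satisfies `b(t₀) = 1` and `b'(t₀) = −S(e_n, e_n)`. -/
theorem deriv_normal_length
    (n : ℕ) (hn : 2 ≤ n) (t₀ : ℝ)
    (g : ℝ → LinearMap.BilinForm ℝ (Fin n → ℝ))
    (S : LinearMap.BilinForm ℝ (Fin n → ℝ))
    (hSsymm : ∀ v w, S v w = S w v)
    (hgsymm : ∀ t v w, g t v w = g t w v)
    (hgpos : ∀ t v, v ≠ 0 → 0 < g t v v)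
    (hgderiv : ∀ v w, HasDerivAt (fun t => g t v w) (-2 * S v w) t₀)
    (e : Fin n → (Fin n → ℝ))
    (hbasis : ∃ b : Module.Basis (Fin n) ℝ (Fin n → ℝ), ∀ i, b i = e i)
    (honb : ∀ i j, g t₀ (e i) (e j) = if i = j then 1 else 0)
    (a : Fin (n - 1) → ℝ → ℝ)
    (ha0 : ∀ i, a i t₀ = 0)
    (haderiv : ∀ i : Fin (n - 1),
      HasDerivAt (a i)
        (2 * S (e (Fin.castLE (Nat.sub_le n 1) i)) (e ⟨n - 1, by omega⟩)) t₀)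
    (w : ℝ → (Fin n → ℝ))
    (hw : ∀ t, w t = e ⟨n - 1, by omega⟩
            + ∑ j : Fin (n - 1), a j t • e (Fin.castLE (Nat.sub_le n 1) j))
    (b : ℝ → ℝ)
    (hb : ∀ t, b t = Real.sqrt (g t (w t) (w t))) :
    b t₀ = 1 ∧ HasDerivAt b (-(S (e ⟨n - 1, by omega⟩) (e ⟨n - 1, by omega⟩))) t₀ := by
  have hn1 : n - 1 < n := by omega
  set N : Fin n := ⟨n - 1, hn1⟩ with hN
  set c : Fin (n - 1) → Fin n := Fin.castLE (Nat.sub_le n 1) with hc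
  have hcN : ∀ j : Fin (n - 1), c j ≠ N := by
    intro j h
    have := congrArg Fin.val h
    simp [hc, hN, Fin.castLE] at this
    omega
  set F : ℝ → ℝ := fun t => g t (e N) (e N)
      + (∑ j, a j t * g t (e (c j)) (e N))
      + ∑ j, a j t * (g t (e N) (e (c j))
          + ∑ k, a k t * g t (e (c k)) (e (c j))) with hF
  have hfeq : ∀ t, g t (w t) (w t) = F t := by
    intro t
    rw [hw t]
    simp only [hF, map_add, map_sum, map_smul, LinearMap.add_apply, LinearMap.sum_apply,
      LinearMap.smul_apply, smul_eq_mul]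
  have hFt0 : F t₀ = 1 := by
    simp [hF, ha0, honb]
  have hFd : HasDerivAt F (-2 * S (e N) (e N)) t₀ := by
    have h1 : HasDerivAt (fun t => g t (e N) (e N)) (-2 * S (e N) (e N)) t₀ := hgderiv _ _
    have h2 : HasDerivAt (fun t => ∑ j, a j t * g t (e (c j)) (e N)) (0 : ℝ) t₀ := by
      have h := HasDerivAt.fun_sum (u := Finset.univ)
        (A := fun j t => a j t * g t (e (c j)) (e N))
        (fun j _ => (haderiv j).mul (hgderiv (e (c j)) (e N)))
      refine h.congr_deriv ?_
      apply Finset.sum_eq_zero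
      intro j _
      rw [ha0, honb, if_neg (hcN j)]
      ring
    have h3 : HasDerivAt (fun t => ∑ j, a j t * (g t (e N) (e (c j))
        + ∑ k, a k t * g t (e (c k)) (e (c j)))) (0 : ℝ) t₀ := by
      have h := HasDerivAt.fun_sum (u := Finset.univ)
        (A := fun j t => a j t * (g t (e N) (e (c j))
          + ∑ k, a k t * g t (e (c k)) (e (c j))))
        (fun j _ => (haderiv j).mul ((hgderiv (e N) (e (c j))).add
          (HasDerivAt.fun_sum (u := Finset.univ)
            (A := fun k t => a k t * g t (e (c k)) (e (c j)))
            (fun k _ => (haderiv k).mul (hgderiv (e (c k)) (e (c j)))))))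
      refine h.congr_deriv ?_
      apply Finset.sum_eq_zero
      intro j _
      rw [ha0, honb, if_neg (fun h => hcN j h.symm)]
      simp [ha0]
    have := (h1.add h2).add h3
    exact this.congr_deriv (by ring)
  have hbsq : ∀ t, b t = Real.sqrt (F t) := by
    intro t; rw [hb t, hfeq t]
  have hb0 : b t₀ = 1 := by rw [hbsq, hFt0, Real.sqrt_one]
  refine ⟨hb0, ?_⟩
  have hsq : HasDerivAt Real.sqrt (1 / (2 * Real.sqrt (F t₀))) (F t₀) :=
    Real.hasDerivAt_sqrt (by rw [hFt0]; norm_num)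
  have hcomp := hsq.comp t₀ hFd
  have heq : Real.sqrt ∘ F = b := funext fun t => (hbsq t).symm
  rw [heq] at hcomp
  refine hcomp.congr_deriv ?_
  rw [hFt0, Real.sqrt_one]
  ring
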